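/- Let (A,B,C,f,g) be a three-term complex in 𝒞, i.e. f : A ⟶ B, g : B ⟶ C with f ≫ g = 0. Suppose that either (a) the map Hom(A⟦1⟧, B) → Hom(A⟦1⟧, C), u ↦ u ≫ g, is surjective, or (b) the map Hom(B⟦1⟧, C) → Hom(A⟦1⟧, C), v ↦ f⟦1⟧ ≫ v, is surjective. Then any two convolutions of the complex are isomorphic: if each of Z₁ and Z₂ is a convolution of some right Postnikov system or of some left Postnikov system associated to (A,B,C,f,g), then Z₁ ≅ Z₂. -/

import Mathlib

open CategoryTheory Category Limits Pretriangulated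

variable {𝒞 : Type*} [Category 𝒞] [HasZeroObject 𝒞] [HasShift 𝒞 ℤ] [Preadditive 𝒞]
  [∀ n : ℤ, (CategoryTheory.shiftFunctor 𝒞 n).Additive] [Pretriangulated 𝒞]

/-- `Z` is a convolution of some right Postnikov system associated to the three-term
complex `A ⟶f B ⟶g C`: there are a distinguished triangle `B ⟶g C ⟶h X ⟶i B⟦1⟧` and a
morphism `j : A⟦1⟧ ⟶ X` with `j ≫ i = f⟦1⟧` such that `Z` is a cone of `j`. -/
def IsRightPostnikovConvolution {A B C : 𝒞} (f : A ⟶ B) (g : B ⟶ C) (Z : 𝒞) : Prop :=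
  ∃ (X : 𝒞) (h : C ⟶ X) (i : X ⟶ B⟦(1 : ℤ)⟧) (j : A⟦(1 : ℤ)⟧ ⟶ X)
    (p : X ⟶ Z) (q : Z ⟶ A⟦(1 : ℤ)⟧⟦(1 : ℤ)⟧),
    (Triangle.mk g h i ∈ distTriang 𝒞) ∧ j ≫ i = f⟦(1 : ℤ)⟧' ∧
    Triangle.mk j p q ∈ distTriang 𝒞

/-- `Z` is a convolution of some left Postnikov system associated to the three-term
complex `A ⟶f B ⟶g C`: there are a distinguished triangle `A ⟶f B ⟶k Y ⟶l A⟦1⟧` and a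
morphism `m : Y ⟶ C` with `k ≫ m = g` such that `Z` is a cone of `m`. -/
def IsLeftPostnikovConvolution {A B C : 𝒞} (f : A ⟶ B) (g : B ⟶ C) (Z : 𝒞) : Prop :=
  ∃ (Y : 𝒞) (k : B ⟶ Y) (l : Y ⟶ A⟦(1 : ℤ)⟧) (m : Y ⟶ C)
    (p : C ⟶ Z) (q : Z ⟶ Y⟦(1 : ℤ)⟧),
    (Triangle.mk f k l ∈ distTriang 𝒞) ∧ k ≫ m = g ∧
    Triangle.mk m p q ∈ distTriang 𝒞

/-- Changing the sign of the first and third morphisms of a distinguished triangle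
yields a distinguished triangle. -/
lemma neg₁₃_distTriang {X Y Z : 𝒞} {a : X ⟶ Y} {b : Y ⟶ Z} {c : Z ⟶ X⟦(1 : ℤ)⟧}
    (hT : Triangle.mk a b c ∈ distTriang 𝒞) :
    Triangle.mk (-a) b (-c) ∈ distTriang 𝒞 := by
  refine isomorphic_distinguished _ hT _ ?_
  exact Triangle.isoMk _ _ ⟨-𝟙 X, -𝟙 X, by show (-𝟙 X) ≫ (-𝟙 X) = 𝟙 X; simp,
    by show (-𝟙 X) ≫ (-𝟙 X) = 𝟙 X; simp⟩ (Iso.refl _) (Iso.refl _)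
    (by show (-a) ≫ 𝟙 Y = (-𝟙 X) ≫ a; simp) (by show b ≫ 𝟙 Z = 𝟙 Y ≫ b; simp)
    (by show (-c) ≫ (shiftFunctor 𝒞 (1 : ℤ)).map (-𝟙 X) = 𝟙 Z ≫ c; simp)

/-- A convolution of a left Postnikov system is also a convolution of some right
Postnikov system. -/
lemma IsLeftPostnikovConvolution.isRightPostnikovConvolution [IsTriangulated 𝒞]
    {A B C : 𝒞} {f : A ⟶ B} {g : B ⟶ C} {Z : 𝒞}
    (h : IsLeftPostnikovConvolution f g Z) : IsRightPostnikovConvolution f g Z := by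
  obtain ⟨Y, k, l, m, p, q, hT, hkm, hZ⟩ := h
  obtain ⟨X, h', i, hX⟩ := distinguished_cocone_triangle g
  have oct := Triangulated.someOctahedron (u₁₂ := k) (u₂₃ := m) (u₁₃ := g)
    (v₁₂ := l) (w₁₂ := -f⟦(1 : ℤ)⟧') hkm (rot_of_distTriang _ hT) hZ hX
  refine ⟨X, h', i, -oct.m₁, oct.m₃, -(q ≫ l⟦(1 : ℤ)⟧'), hX, ?_, ?_⟩
  · have := oct.comm₂
    simp only [Preadditive.neg_comp, this, neg_neg]
  · exact neg₁₃_distTriang oct.mem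

/-- Any two convolutions of right Postnikov systems are isomorphic under the
surjectivity hypothesis. -/
lemma rightPostnikovConvolution_unique
    {A B C : 𝒞} (f : A ⟶ B) (g : B ⟶ C)
    (hsurj : Function.Surjective (fun u : A⟦(1 : ℤ)⟧ ⟶ B => u ≫ g) ∨
      Function.Surjective (fun v : B⟦(1 : ℤ)⟧ ⟶ C => f⟦(1 : ℤ)⟧' ≫ v))
    {Z₁ Z₂ : 𝒞}
    (h₁ : IsRightPostnikovConvolution f g Z₁)
    (h₂ : IsRightPostnikovConvolution f g Z₂) :
    Nonempty (Z₁ ≅ Z₂) := by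
  obtain ⟨X₁, hm₁, i₁, j₁, p₁, q₁, hX₁, hji₁, hZ₁⟩ := h₁
  obtain ⟨X₂, hm₂, i₂, j₂, p₂, q₂, hX₂, hji₂, hZ₂⟩ := h₂
  obtain ⟨e, he₁, he₂⟩ := complete_distinguished_triangle_morphism
    (Triangle.mk g hm₁ i₁) (Triangle.mk g hm₂ i₂) hX₁ hX₂ (𝟙 B) (𝟙 C) (by show g ≫ 𝟙 C = 𝟙 B ≫ g; simp)
  change X₁ ⟶ X₂ at e
  simp only [Triangle.mk_obj₁, Triangle.mk_obj₂, Triangle.mk_obj₃, Triangle.mk_mor₂,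
    Triangle.mk_mor₃, id_comp] at he₁ he₂
  have he₂' : e ≫ i₂ = i₁ := by
    simpa using (show i₁ ≫ (shiftFunctor 𝒞 (1 : ℤ)).map (𝟙 B) = e ≫ i₂ from he₂).symm
  have hd : (j₂ - j₁ ≫ e) ≫ i₂ = 0 := by
    rw [Preadditive.sub_comp, hji₂, assoc, he₂', hji₁, sub_self]
  obtain ⟨c, hc⟩ : ∃ c : (shiftFunctor 𝒞 (1 : ℤ)).obj A ⟶ C, j₂ - j₁ ≫ e = c ≫ hm₂ :=
    Triangle.coyoneda_exact₃ _ hX₂ (j₂ - j₁ ≫ e) hd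
  replace he₁ : hm₁ ≫ e = hm₂ := by simpa using (show hm₁ ≫ e = 𝟙 C ≫ hm₂ from he₁)
  have key : ∃ e' : X₁ ⟶ X₂, hm₁ ≫ e' = hm₂ ∧ e' ≫ i₂ = i₁ ∧ j₁ ≫ e' = j₂ := by
    rcases hsurj with hs | hs
    · obtain ⟨u, hu⟩ := hs c
      have hu' : u ≫ g = c := hu
      have hgh : g ≫ hm₂ = 0 := comp_distTriang_mor_zero₁₂ _ hX₂
      have hz : j₂ - j₁ ≫ e = 0 := by rw [hc, ← hu', assoc, hgh, comp_zero]
      exact ⟨e, he₁, he₂', (sub_eq_zero.mp hz).symm⟩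
    · obtain ⟨v, hv⟩ := hs c
      have hv' : f⟦(1 : ℤ)⟧' ≫ v = c := hv
      have hhi₁ : hm₁ ≫ i₁ = 0 := comp_distTriang_mor_zero₂₃ _ hX₁
      have hhi₂ : hm₂ ≫ i₂ = 0 := comp_distTriang_mor_zero₂₃ _ hX₂
      refine ⟨e + i₁ ≫ v ≫ hm₂, ?_, ?_, ?_⟩
      · rw [Preadditive.comp_add, he₁, reassoc_of% hhi₁, zero_comp, add_zero]
      · rw [Preadditive.add_comp, he₂', assoc, assoc, hhi₂, comp_zero, comp_zero, add_zero]
      · have h1 : j₁ ≫ i₁ ≫ v ≫ hm₂ = c ≫ hm₂ := by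
          rw [reassoc_of% hji₁, ← hv', assoc]
        rw [Preadditive.comp_add, h1, ← hc]
        abel
  obtain ⟨e', he'₁, he'₂, he'₃⟩ := key
  have : IsIso e' := by
    refine isIso₃_of_isIso₁₂
      (Triangle.homMk (Triangle.mk g hm₁ i₁) (Triangle.mk g hm₂ i₂) (𝟙 B) (𝟙 C) e'
        (by show g ≫ 𝟙 C = 𝟙 B ≫ g; simp) (he'₁.trans (id_comp hm₂).symm)
        (by show i₁ ≫ (shiftFunctor 𝒞 (1 : ℤ)).map (𝟙 B) = e' ≫ i₂; simpa using he'₂.symm)) hX₁ hX₂ ?_ ?_ <;>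
    exact IsIso.id _
  obtain ⟨c', hc'₁, hc'₂⟩ := complete_distinguished_triangle_morphism
    (Triangle.mk j₁ p₁ q₁) (Triangle.mk j₂ p₂ q₂) hZ₁ hZ₂ (𝟙 _) e' (he'₃.trans (id_comp j₂).symm)
  have : IsIso c' := by
    refine isIso₃_of_isIso₁₂
      (Triangle.homMk (Triangle.mk j₁ p₁ q₁) (Triangle.mk j₂ p₂ q₂) (𝟙 _) e' c'
        (he'₃.trans (id_comp j₂).symm) (by simpa using hc'₁) (by simpa using hc'₂)) hZ₁ hZ₂ ?_ ?_
    · exact IsIso.id _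
    · exact (inferInstance : IsIso e')
  exact ⟨@asIso _ _ _ _ c' this⟩

/-- If either post-composition with `g` is surjective as a map
`Hom(A⟦1⟧, B) → Hom(A⟦1⟧, C)`, or pre-composition with `f⟦1⟧` is surjective as a map
`Hom(B⟦1⟧, C) → Hom(A⟦1⟧, C)`, then any two convolutions (of right or left Postnikov
systems) of the three-term complex `A ⟶f B ⟶g C` are isomorphic. -/
theorem convolutions_iso_of_surjective [IsTriangulated 𝒞]
    {A B C : 𝒞} (f : A ⟶ B) (g : B ⟶ C) (hfg : f ≫ g = 0)
    (hsurj : Function.Surjective (fun u : A⟦(1 : ℤ)⟧ ⟶ B => u ≫ g) ∨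
      Function.Surjective (fun v : B⟦(1 : ℤ)⟧ ⟶ C => f⟦(1 : ℤ)⟧' ≫ v))
    {Z₁ Z₂ : 𝒞}
    (h₁ : IsRightPostnikovConvolution f g Z₁ ∨ IsLeftPostnikovConvolution f g Z₁)
    (h₂ : IsRightPostnikovConvolution f g Z₂ ∨ IsLeftPostnikovConvolution f g Z₂) :
    Nonempty (Z₁ ≅ Z₂) := by
  rcases h₁ with h₁ | h₁ <;> rcases h₂ with h₂ | h₂ <;>
  [skip; exact rightPostnikovConvolution_unique f g hsurj h₁ h₂.isRightPostnikovConvolution;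
   exact rightPostnikovConvolution_unique f g hsurj h₁.isRightPostnikovConvolution h₂;
   exact rightPostnikovConvolution_unique f g hsurj h₁.isRightPostnikovConvolution
     h₂.isRightPostnikovConvolution]
  exact rightPostnikovConvolution_unique f g hsurj h₁ h₂
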